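/- Let G be a finite simple graph with global ℓth-order clustering coefficient C_ℓ. Then the sum over all vertices v of the number of ℓ-cliques cut by the 1-hop neighborhood partition (N'_v, complement), i.e., Σ_v cut_{K_ℓ}(N'_v), is at most (1 - C_ℓ)·|W_ℓ|, where |W_ℓ| is the total number of ℓ-wedges in G. -/

import Mathlib

/-- The set of `ℓ`-wedges of `G`: pairs of an `ℓ`-clique `p.1` and an adjacent edge, given
by the shared vertex `p.2.1 ∈ p.1` and an outside endpoint `p.2.2 ∉ p.1`. -/
def wedges {V : Type*} (G : SimpleGraph V) (ℓ : ℕ) : Set (Finset V × V × V) :=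
  {p | G.IsNClique ℓ p.1 ∧ p.2.1 ∈ p.1 ∧ p.2.2 ∉ p.1 ∧ G.Adj p.2.1 p.2.2}

/-- The set of closed `ℓ`-wedges: the clique together with the outside endpoint forms an
`(ℓ+1)`-clique. -/
def closedWedges {V : Type*} [DecidableEq V] (G : SimpleGraph V) (ℓ : ℕ) :
    Set (Finset V × V × V) :=
  wedges G ℓ ∩ {p | G.IsNClique (ℓ + 1) (insert p.2.2 p.1)}

/-- The global `ℓ`th-order clustering coefficient: the fraction of `ℓ`-wedges that are
closed. -/
noncomputable def globalCC {V : Type*} [Fintype V] [DecidableEq V]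
    (G : SimpleGraph V) (ℓ : ℕ) : ℝ :=
  ((closedWedges G ℓ).ncard : ℝ) / ((wedges G ℓ).ncard : ℝ)

/-- The number of `ℓ`-cliques cut by the partition `(N'_v, complement)`, where
`N'_v = {v} ∪ neighbors(v)`. -/
noncomputable def nbrCut {V : Type*} [Fintype V] (G : SimpleGraph V) (ℓ : ℕ) (v : V) : ℕ :=
  {s : Finset V | G.IsNClique ℓ s ∧
    (∃ x ∈ s, x ∈ insert v (G.neighborSet v)) ∧
    (∃ x ∈ s, x ∉ insert v (G.neighborSet v))}.ncard

theorem stmt_16 {V : Type*} [Fintype V] [DecidableEq V] (G : SimpleGraph V) (ℓ : ℕ)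
    (hW : 0 < (wedges G ℓ).ncard) :
    (∑ v : V, (nbrCut G ℓ v : ℝ)) ≤ (1 - globalCC G ℓ) * ((wedges G ℓ).ncard : ℝ) := by
  classical
  have hWfin : (wedges G ℓ).Finite := Set.toFinite _
  have hCW : closedWedges G ℓ ⊆ wedges G ℓ := Set.inter_subset_left
  have hCle : (closedWedges G ℓ).ncard ≤ (wedges G ℓ).ncard := Set.ncard_le_ncard hCW hWfin
  have hOpen : (wedges G ℓ \ closedWedges G ℓ).ncard
      = (wedges G ℓ).ncard - (closedWedges G ℓ).ncard := Set.ncard_diff hCW (Set.toFinite _)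
  have hA : ∀ v : V, {s : Finset V | G.IsNClique ℓ s ∧
      (∃ x ∈ s, x ∈ insert v (G.neighborSet v)) ∧
      (∃ x ∈ s, x ∉ insert v (G.neighborSet v))}.Finite := fun v => Set.toFinite _
  have key : (∑ v : V, nbrCut G ℓ v) ≤ (wedges G ℓ \ closedWedges G ℓ).ncard := by
    have hsum : ∑ v : V, nbrCut G ℓ v
        = (Finset.univ.sigma fun v => (hA v).toFinset).card := by
      rw [Finset.card_sigma]
      refine Finset.sum_congr rfl fun v _ => ?_
      rw [nbrCut, Set.ncard_eq_toFinset_card _ (hA v)]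
    rw [hsum, Set.ncard_eq_toFinset_card _ (Set.toFinite (wedges G ℓ \ closedWedges G ℓ))]
    apply Finset.card_le_card_of_injOn
      (fun p => (p.2, (if h : ∃ x ∈ p.2, x ∈ insert p.1 (G.neighborSet p.1)
        then h.choose else p.1), p.1))
    · rintro ⟨v, s⟩ hp
      simp only [Finset.mem_coe, Finset.mem_sigma, Set.Finite.mem_toFinset, Set.mem_setOf_eq] at hp
      obtain ⟨_, ⟨hclique, hx, hy⟩⟩ := hp
      obtain ⟨y, hys, hyn⟩ := hy
      have hvs : v ∉ s := by
        intro hv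
        apply hyn
        rcases eq_or_ne y v with rfl | hne
        · exact Set.mem_insert _ _
        · exact Set.mem_insert_of_mem _ ((hclique.isClique hv hys (Ne.symm hne)))
      simp only [Finset.mem_coe, Set.Finite.mem_toFinset]
      rw [dif_pos hx]
      obtain ⟨hxs, hxn⟩ := hx.choose_spec
      have hxv : G.Adj hx.choose v := by
        rcases Set.mem_insert_iff.mp hxn with h | h
        · exact absurd (h ▸ hxs) hvs
        · exact (G.mem_neighborSet v hx.choose).mp h |>.symm
      constructor
      · exact ⟨hclique, hxs, hvs, hxv⟩
      · intro hc
        obtain ⟨_, hcl⟩ := hc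
        apply hyn
        have hadj : G.Adj v y := by
          apply hcl.isClique (by simp) (by simp [hys])
          intro h; exact hyn (h ▸ Set.mem_insert _ _)
        exact Set.mem_insert_of_mem _ ((G.mem_neighborSet v y).mpr hadj)
    · rintro ⟨v, s⟩ _ ⟨v', s'⟩ _ hf
      simp only [Prod.mk.injEq] at hf
      obtain ⟨h1, _, h3⟩ := hf
      subst h1; subst h3; rfl
  have hw0 : (0:ℝ) < ((wedges G ℓ).ncard : ℝ) := by exact_mod_cast hW
  rw [globalCC, one_sub_mul, div_mul_cancel₀ _ (ne_of_gt hw0)]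
  calc (∑ v : V, (nbrCut G ℓ v : ℝ)) = ((∑ v : V, nbrCut G ℓ v : ℕ) : ℝ) := by push_cast; ring
    _ ≤ (((wedges G ℓ \ closedWedges G ℓ).ncard : ℕ) : ℝ) := by exact_mod_cast key
    _ = ((wedges G ℓ).ncard : ℝ) - ((closedWedges G ℓ).ncard : ℝ) := by
        rw [hOpen]; exact Nat.cast_sub hCle
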